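/- Let A be a commutative von Neumann regular ring and define the Loewy series s_α A transfinitely by s_0 A = 0, s_{α+1}A/s_α A = socle of A/s_α A, and s_λ A = ⋃_{α<λ} s_α A at limit ordinals. Then for every ordinal α, Spec(A/s_α A) is homeomorphic to δ^α Spec(A), the α-th Cantor–Bendixson derivative of Spec(A). -/

import Mathlib

open Ordinal

/-- The socle of a commutative ring: the sum of all simple ideals. -/
def socleIdeal (A : Type*) [CommRing A] : Ideal A :=
  sSup {I : Ideal A | IsSimpleModule A I}

/-- The Loewy series of a commutative ring: `loewy A 0 = ⊥`,
`loewy A (α+1)` is the preimage of the socle of `A ⧸ loewy A α`, and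
unions are taken at limit ordinals. -/
noncomputable def loewy (A : Type*) [CommRing A] : Ordinal.{0} → Ideal A :=
  fun o => Ordinal.limitRecOn o ⊥
    (fun _ s => Ideal.comap (Ideal.Quotient.mk s) (socleIdeal (A ⧸ s)))
    (fun o _ ih => ⨆ (b : Ordinal) (h : b < o), ih b h)

/-- A ring is semi-artinian if its Loewy series reaches the whole ring. -/
def IsSemiArtinian (A : Type*) [CommRing A] : Prop :=
  ∃ α : Ordinal.{0}, loewy A α = ⊤

/-- The Cantor–Bendixson derivative of a subset: the set of its
non-isolated points in the subspace topology. -/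
def derivSet {X : Type*} [TopologicalSpace X] (s : Set X) : Set X :=
  {x ∈ s | ∀ U : Set X, IsOpen U → x ∈ U → ¬ (U ∩ s ⊆ {x})}

/-- Iterated Cantor–Bendixson derivatives of a topological space. -/
noncomputable def cbDeriv (X : Type*) [TopologicalSpace X] : Ordinal.{0} → Set X :=
  fun o => Ordinal.limitRecOn o Set.univ
    (fun _ s => derivSet s)
    (fun o _ ih => ⋂ (b : Ordinal) (h : b < o), ih b h)

section VNR

variable {B : Type*} [CommRing B]

lemma vnr_eq_zero_of_nilpotent (hB : ∀ a : B, ∃ x, a * x * a = a) {a : B}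
    (h : IsNilpotent a) : a = 0 := by
  obtain ⟨x, hx⟩ := hB a
  obtain ⟨n, hn⟩ := h
  have key : ∀ n : ℕ, a = a ^ (n + 1) * x ^ n := by
    intro n
    induction n with
    | zero => simp
    | succ m ihm =>
      calc a = a * x * a := hx.symm
        _ = a * x * (a ^ (m + 1) * x ^ m) := by rw [← ihm]
        _ = a ^ (m + 1 + 1) * x ^ (m + 1) := by ring
  have : a ^ (n + 1) = 0 := by rw [pow_succ, hn, zero_mul]
  rw [key n, this, zero_mul]

lemma vnr_exists_prime_not_mem (hB : ∀ a : B, ∃ x, a * x * a = a) {a : B}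
    (ha : a ≠ 0) : ∃ P : PrimeSpectrum B, a ∉ P.asIdeal := by
  by_contra h
  push_neg at h
  apply ha
  apply vnr_eq_zero_of_nilpotent hB
  rw [nilpotent_iff_mem_prime]
  intro J hJ
  exact h ⟨J, hJ⟩

/-- If `e` is a nonzero idempotent lying in every prime except `P`, then
`span {e}` is an atom. -/
lemma span_idem_isAtom (hB : ∀ a : B, ∃ x, a * x * a = a) (P : PrimeSpectrum B)
    (e : B) (he : e * e = e) (heP : e ∉ P.asIdeal)
    (hall : ∀ Q : PrimeSpectrum B, Q ≠ P → e ∈ Q.asIdeal) :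
    IsAtom (Ideal.span {e}) := by
  constructor
  · intro hbot
    apply heP
    have : e ∈ Ideal.span {e} := Ideal.mem_span_singleton_self e
    rw [hbot] at this
    simp only [Ideal.mem_bot] at this
    rw [this]; exact zero_mem _
  · intro J hJ
    by_contra hJne
    obtain ⟨y, hyJ, hy0⟩ := (Submodule.ne_bot_iff J).mp hJne
    have hyspan : y ∈ Ideal.span {e} := hJ.le hyJ
    obtain ⟨c, hc⟩ := Ideal.mem_span_singleton'.mp hyspan
    obtain ⟨Q₀, hQ₀⟩ := vnr_exists_prime_not_mem hB hy0
    have heQ₀ : e ∉ Q₀.asIdeal := by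
      intro h; exact hQ₀ (hc ▸ Q₀.asIdeal.mul_mem_left c h)
    have hQ₀P : Q₀ = P := by
      by_contra hne; exact heQ₀ (hall Q₀ hne)
    subst hQ₀P
    obtain ⟨z, hz⟩ := hB y
    have hfP : y * z ∉ Q₀.asIdeal := by
      intro h; exact hQ₀ (by rw [← hz]; exact Q₀.asIdeal.mul_mem_right y h)
    have hef : e * (1 - y * z) = 0 := by
      apply vnr_eq_zero_of_nilpotent hB
      rw [nilpotent_iff_mem_prime]
      intro I hI
      by_cases hIQ : (⟨I, hI⟩ : PrimeSpectrum B) = Q₀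
      · have h1f : (1 : B) - y * z ∈ I := by
          have hmem : (y * z) * (1 - y * z) ∈ I := by
            have h0 : (y * z) * (1 - y * z) = 0 := by linear_combination (-z) * hz
            rw [h0]; exact zero_mem _
          rcases hI.mem_or_mem hmem with h | h
          · exact absurd (hIQ ▸ h : y * z ∈ Q₀.asIdeal) hfP
          · exact h
        exact I.mul_mem_left e h1f
      · exact I.mul_mem_right _ (hall ⟨I, hI⟩ hIQ)
    have hey : e ∈ Ideal.span {y} := by
      have h2 : e = (e * z) * y := by linear_combination hef
      rw [h2]; exact Ideal.mul_mem_left _ _ (Ideal.mem_span_singleton_self y)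
    have : Ideal.span {e} ≤ J := by
      rw [Ideal.span_le, Set.singleton_subset_iff]
      exact (Ideal.span_le.mpr (Set.singleton_subset_iff.mpr hyJ) : Ideal.span {y} ≤ J) hey
    exact absurd (lt_of_lt_of_le hJ this) (lt_irrefl J)

end VNR

section VNR2
variable {B : Type*} [CommRing B]

/-- If `span {e}` is an atom for an idempotent `e`, any prime avoiding `e`
equals `span {1 - e}`. -/
lemma prime_eq_of_atom (e : B) (he : e * e = e) (hatom : IsAtom (Ideal.span {e}))
    (Q : PrimeSpectrum B) (heQ : e ∉ Q.asIdeal) :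
    Q.asIdeal = Ideal.span {1 - e} := by
  apply le_antisymm
  · intro q hq
    have hqe : q * e = 0 := by
      by_contra hne
      have hle : Ideal.span {q * e} ≤ Ideal.span {e} := by
        rw [Ideal.span_le, Set.singleton_subset_iff]
        exact Ideal.mul_mem_left _ q (Ideal.mem_span_singleton_self e)
      rcases hatom.le_iff.mp hle with h | h
      · have hm := Ideal.mem_span_singleton_self (q * e)
        rw [h] at hm
        exact hne (by simpa [Ideal.mem_bot] using hm)
      · have : e ∈ Ideal.span {q * e} := h ▸ Ideal.mem_span_singleton_self e
        obtain ⟨c, hc⟩ := Ideal.mem_span_singleton'.mp this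
        apply heQ
        rw [← hc]
        exact Q.asIdeal.mul_mem_left c (Q.asIdeal.mul_mem_right e hq)
    have : q = q * (1 - e) := by linear_combination hqe
    rw [this]
    exact Ideal.mul_mem_left _ q (Ideal.mem_span_singleton_self _)
  · rw [Ideal.span_le, Set.singleton_subset_iff]
    have h0 : e * (1 - e) ∈ Q.asIdeal := by
      have : e * (1 - e) = 0 := by linear_combination -he
      rw [this]; exact zero_mem _
    rcases Q.isPrime.mem_or_mem h0 with h | h
    · exact absurd h heQ
    · exact h

/-- Key lemma: in a commutative von Neumann regular ring, a prime contains the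
socle iff it is a non-isolated point of the prime spectrum. -/
lemma socle_le_iff (hB : ∀ a : B, ∃ x, a * x * a = a) (P : PrimeSpectrum B) :
    socleIdeal B ≤ P.asIdeal ↔
      ∀ U : Set (PrimeSpectrum B), IsOpen U → P ∈ U → ¬ U ⊆ {P} := by
  constructor
  · -- socle ≤ P → not isolated
    intro hle U hU hPU hsub
    obtain ⟨V, ⟨a, rfl⟩, hPV, hVU⟩ :=
      (PrimeSpectrum.isTopologicalBasis_basic_opens (R := B)).exists_subset_of_mem_open hPU hU
    have haP : a ∉ P.asIdeal := by
      simpa [PrimeSpectrum.basicOpen_eq_zeroLocus_compl, PrimeSpectrum.mem_zeroLocus] using hPV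
    obtain ⟨x, hx⟩ := hB a
    set e := a * x with hedef
    have he : e * e = e := by linear_combination x * hx
    have heP : e ∉ P.asIdeal := by
      intro h
      exact haP (by rw [← hx]; exact P.asIdeal.mul_mem_right a h)
    have hall : ∀ Q : PrimeSpectrum B, Q ≠ P → e ∈ Q.asIdeal := by
      intro Q hQ
      have haQ : a ∈ Q.asIdeal := by
        by_contra haQ
        have : Q ∈ (PrimeSpectrum.basicOpen a : Set (PrimeSpectrum B)) := by
          simpa [PrimeSpectrum.basicOpen_eq_zeroLocus_compl, PrimeSpectrum.mem_zeroLocus]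
            using haQ
        exact hQ (hsub (hVU this))
      exact Q.asIdeal.mul_mem_right x haQ
    have hatom := span_idem_isAtom hB P e he heP hall
    apply heP
    apply hle
    have : Ideal.span {e} ∈ {I : Ideal B | IsSimpleModule B I} := by
      rw [Set.mem_setOf_eq, isSimpleModule_iff_isAtom]
      exact hatom
    exact le_sSup this (Ideal.mem_span_singleton_self e)
  · -- not isolated → socle ≤ P; contrapositive
    intro hiso
    by_contra hle
    have : ∃ I ∈ {I : Ideal B | IsSimpleModule B I}, ¬ I ≤ P.asIdeal := by
      by_contra h
      push_neg at h
      exact hle (sSup_le h)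
    obtain ⟨I, hIsimple, hInle⟩ := this
    obtain ⟨y, hyI, hyP⟩ := SetLike.not_le_iff_exists.mp hInle
    have hIatom : IsAtom I := isSimpleModule_iff_isAtom.mp hIsimple
    have hy0 : y ≠ 0 := fun h => hyP (h ▸ zero_mem _)
    obtain ⟨z, hz⟩ := hB y
    set e := y * z with hedef
    have he : e * e = e := by linear_combination z * hz
    have heP : e ∉ P.asIdeal := by
      intro h
      exact hyP (by rw [← hz]; exact P.asIdeal.mul_mem_right y h)
    have hspanI : Ideal.span {e} = I := by
      have h1 : Ideal.span {y} ≤ I := by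
        rw [Ideal.span_le, Set.singleton_subset_iff]; exact hyI
      have h2 : Ideal.span {y} ≠ ⊥ := by
        intro h
        have hm := Ideal.mem_span_singleton_self y
        rw [h] at hm
        exact hy0 (by simpa [Ideal.mem_bot] using hm)
      have h3 : Ideal.span {y} = I := by
        rcases hIatom.le_iff.mp h1 with h | h
        · exact absurd h h2
        · exact h
      rw [← h3]
      apply le_antisymm
      · rw [Ideal.span_le, Set.singleton_subset_iff]
        exact Ideal.mul_mem_right z _ (Ideal.mem_span_singleton_self y)
      · rw [Ideal.span_le, Set.singleton_subset_iff]
        have hye : y = y * e := by linear_combination -hz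
        rw [hye]
        exact Ideal.mul_mem_left _ _ (Ideal.mem_span_singleton_self e)
    have hatom : IsAtom (Ideal.span {e}) := hspanI ▸ hIatom
    apply hiso (PrimeSpectrum.basicOpen e : Set (PrimeSpectrum B))
        (PrimeSpectrum.basicOpen e).isOpen
    · simpa [PrimeSpectrum.basicOpen_eq_zeroLocus_compl, PrimeSpectrum.mem_zeroLocus] using heP
    · intro Q hQ
      have heQ : e ∉ Q.asIdeal := by
        simpa [PrimeSpectrum.basicOpen_eq_zeroLocus_compl, PrimeSpectrum.mem_zeroLocus] using hQ
      have h1 := prime_eq_of_atom e he hatom Q heQ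
      have h2 := prime_eq_of_atom e he hatom P heP
      exact Set.mem_singleton_iff.mpr (PrimeSpectrum.ext (h1.trans h2.symm))

end VNR2

/-- Transfer of the derived set along an embedding. -/
lemma mem_derivSet_range_iff {X Y : Type*} [TopologicalSpace X] [TopologicalSpace Y]
    {f : Y → X} (hf : Topology.IsEmbedding f) (y : Y) :
    f y ∈ derivSet (Set.range f) ↔ ∀ V : Set Y, IsOpen V → y ∈ V → ¬ V ⊆ {y} := by
  constructor
  · rintro ⟨-, h⟩ V hV hyV hVsub
    obtain ⟨U, hU, hUV⟩ := hf.toIsInducing.isOpen_iff.mp hV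
    refine h U hU (by rw [← hUV] at hyV; exact hyV) ?_
    rintro x ⟨hxU, y', rfl⟩
    have : y' ∈ V := by rw [← hUV]; exact hxU
    have := hVsub this
    rw [Set.mem_singleton_iff] at this ⊢
    rw [this]
  · intro h
    refine ⟨Set.mem_range_self y, fun U hU hfyU hsub => ?_⟩
    refine h (f ⁻¹' U) (hU.preimage hf.continuous) hfyU ?_
    intro y' hy'
    have : f y' ∈ U ∩ Set.range f := ⟨hy', Set.mem_range_self y'⟩
    exact Set.mem_singleton_iff.mpr (hf.injective (hsub this))

lemma vnr_quotient {A : Type*} [CommRing A] (hA : ∀ a : A, ∃ x, a * x * a = a)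
    (I : Ideal A) : ∀ a : A ⧸ I, ∃ x, a * x * a = a := by
  intro a
  obtain ⟨b, rfl⟩ := Ideal.Quotient.mk_surjective a
  obtain ⟨x, hx⟩ := hA b
  exact ⟨Ideal.Quotient.mk I x, by rw [← map_mul, ← map_mul, hx]⟩

lemma zeroLocus_loewy {A : Type*} [CommRing A] (hA : ∀ a : A, ∃ x, a * x * a = a)
    (α : Ordinal.{0}) :
    PrimeSpectrum.zeroLocus ((loewy A α : Ideal A) : Set A) = cbDeriv (PrimeSpectrum A) α := by
  induction α using Ordinal.limitRecOn with
  | zero =>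
    have h1 : loewy A 0 = ⊥ := Ordinal.limitRecOn_zero _ _ _
    have h2 : cbDeriv (PrimeSpectrum A) 0 = Set.univ := Ordinal.limitRecOn_zero _ _ _
    rw [h1, h2, Set.eq_univ_iff_forall]
    intro P
    rw [PrimeSpectrum.mem_zeroLocus]
    intro x hx
    simp only [SetLike.mem_coe, Ideal.mem_bot] at hx
    rw [hx]; exact zero_mem _
  | add_one β ih =>
    have h1 : loewy A (β + 1) =
        Ideal.comap (Ideal.Quotient.mk (loewy A β)) (socleIdeal (A ⧸ loewy A β)) :=
      Ordinal.limitRecOn_add_one _ _ _ _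
    have h2 : cbDeriv (PrimeSpectrum A) (β + 1) = derivSet (cbDeriv (PrimeSpectrum A) β) :=
      Ordinal.limitRecOn_add_one _ _ _ _
    rw [h1, h2, ← ih]
    set s := loewy A β with hs
    set π := Ideal.Quotient.mk s with hπ
    have hsurj : Function.Surjective π := Ideal.Quotient.mk_surjective
    have hemb := PrimeSpectrum.isClosedEmbedding_comap_of_surjective _ π hsurj
    have hrange : Set.range (PrimeSpectrum.comap π) =
        PrimeSpectrum.zeroLocus ((s : Ideal A) : Set A) := by
      rw [range_comap_of_surjective _ π hsurj]
      congr 1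
      rw [Ideal.mk_ker]
    rw [← hrange]
    ext P
    constructor
    · intro hP
      rw [PrimeSpectrum.mem_zeroLocus] at hP
      have hle : Ideal.comap π (socleIdeal (A ⧸ s)) ≤ P.asIdeal := hP
      have hsP : s ≤ P.asIdeal := le_trans (Ideal.mk_ker.symm.le.trans (Ideal.ker_le_comap π)) hle
      have hPrange : P ∈ Set.range (PrimeSpectrum.comap π) := by
        rw [hrange, PrimeSpectrum.mem_zeroLocus]; exact hsP
      obtain ⟨Q, rfl⟩ := hPrange
      have hQ : socleIdeal (A ⧸ s) ≤ Q.asIdeal := by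
        rw [← Ideal.comap_le_comap_iff_of_surjective π hsurj]
        exact hle
      rw [mem_derivSet_range_iff hemb.toIsEmbedding Q]
      exact (socle_le_iff (vnr_quotient hA s) Q).mp hQ
    · intro hP
      have hPrange : P ∈ Set.range (PrimeSpectrum.comap π) := hP.1
      obtain ⟨Q, rfl⟩ := hPrange
      have hQ : socleIdeal (A ⧸ s) ≤ Q.asIdeal :=
        (socle_le_iff (vnr_quotient hA s) Q).mpr
          ((mem_derivSet_range_iff hemb.toIsEmbedding Q).mp hP)
      rw [PrimeSpectrum.mem_zeroLocus]
      have : Ideal.comap π (socleIdeal (A ⧸ s)) ≤ Ideal.comap π Q.asIdeal :=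
        Ideal.comap_mono hQ
      exact this
  | limit β hβ ih =>
    have h1 : loewy A β = ⨆ (b : Ordinal) (h : b < β), loewy A b :=
      Ordinal.limitRecOn_limit _ _ _ _ hβ
    have h2 : cbDeriv (PrimeSpectrum A) β =
        ⋂ (b : Ordinal) (h : b < β), cbDeriv (PrimeSpectrum A) b :=
      Ordinal.limitRecOn_limit _ _ _ _ hβ
    rw [h1, h2]
    ext P
    simp only [PrimeSpectrum.mem_zeroLocus, Set.mem_iInter]
    constructor
    · intro h b hb
      rw [← ih b hb, PrimeSpectrum.mem_zeroLocus]
      exact le_trans (le_iSup₂ (f := fun b (_ : b < β) => loewy A b) b hb)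
        (by exact_mod_cast h)
    · intro h
      have : (⨆ (b : Ordinal) (hb : b < β), loewy A b) ≤ P.asIdeal := by
        apply iSup₂_le
        intro b hb
        have := h b hb
        rw [← ih b hb, PrimeSpectrum.mem_zeroLocus] at this
        exact this
      exact_mod_cast this


/-- For every ordinal `α`, `Spec (A ⧸ s_α A)` is homeomorphic to the `α`-th
Cantor–Bendixson derivative of `Spec A`. -/
theorem stmt9 (A : Type*) [CommRing A] (hA : ∀ a : A, ∃ x, a * x * a = a)
    (α : Ordinal.{0}) :
    Nonempty (PrimeSpectrum (A ⧸ loewy A α) ≃ₜ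
      (cbDeriv (PrimeSpectrum A) α)) := by
  set π := Ideal.Quotient.mk (loewy A α) with hπ
  have hsurj : Function.Surjective π := Ideal.Quotient.mk_surjective
  have hemb := PrimeSpectrum.isClosedEmbedding_comap_of_surjective _ π hsurj
  have hrange : Set.range (PrimeSpectrum.comap π) = cbDeriv (PrimeSpectrum A) α := by
    rw [range_comap_of_surjective _ π hsurj, ← zeroLocus_loewy hA α]
    congr 1
    rw [Ideal.mk_ker]
  exact ⟨(Topology.IsEmbedding.toHomeomorph hemb.toIsEmbedding).trans (Homeomorph.setCongr hrange)⟩
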